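/- Let a ∈ ℝ \ {0} and c > 0, and define φ(z) = a(1+z)/(1−z) + 2(√(c²+a²) − a)·z/(1−z²) for z ∈ 𝔻. Then φ is univalent (injective) on 𝔻, its image φ(𝔻) is the complement in ℂ of the two vertical half-lines {w : Re w = 0 and |Im w| ≥ c}, φ(0) = a, and dist(φ(0), ∂φ(𝔻)) = √(c² + a²). -/

import Mathlib

open Complex Metric Set


lemma sq_exists (u : ℂ) : ∃ s : ℂ, s ^ 2 = u :=
  ⟨u ^ ((2:ℕ)⁻¹ : ℂ), Complex.cpow_nat_inv_pow u two_ne_zero⟩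

lemma normSq_id (p q : ℝ) (z : ℂ) :
    Complex.normSq ((p:ℂ)*z + q) = Complex.normSq ((p:ℂ) + (q:ℂ)*z) + (q^2-p^2)*(1 - Complex.normSq z) := by
  simp [Complex.normSq_apply, Complex.add_re, Complex.add_im, Complex.mul_re, Complex.mul_im]
  ring

lemma abs_lt_one_of_normSq {z : ℂ} (h : Complex.normSq z < 1) : ‖z‖ < 1 := by
  have h2 := Complex.sq_norm z
  nlinarith [norm_nonneg z]

lemma normSq_lt_one_of_abs {z : ℂ} (h : ‖z‖ < 1) : Complex.normSq z < 1 := by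
  have h2 := Complex.sq_norm z
  nlinarith [norm_nonneg z]

lemma one_sub_sq_ne {z : ℂ} (hz : ‖z‖ < 1) : 1 - z^2 ≠ 0 := by
  intro h
  have h1 : z^2 = 1 := by linear_combination -h
  have h2 : ‖z‖ ^ 2 = 1 := by rw [← norm_pow, h1, norm_one]
  nlinarith [norm_nonneg z]

lemma root_not_slit (a b c : ℝ) (ha : a ≠ 0) (hc : 0 < c) (hb2 : b^2 = c^2+a^2)
    (z w : ℂ) (hz : ‖z‖ < 1)
    (hq : ((a:ℂ)+w)*z^2 + 2*(b:ℂ)*z + ((a:ℂ)-w) = 0) :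
    ¬(w.re = 0 ∧ c ≤ |w.im|) := by
  rintro ⟨hre, him⟩
  set t := w.im with htdef
  have hw : w = (t:ℂ) * I := by
    apply Complex.ext <;> simp [hre, htdef]
  have hbC : ((b:ℝ):ℂ)^2 = (c:ℂ)^2 + (a:ℂ)^2 := by exact_mod_cast hb2
  rw [hw] at hq
  set r : ℂ := ((a:ℂ)+(t:ℂ)*I)*z + b with hrdef
  have hr2 : r^2 = ((c^2 - t^2 : ℝ) : ℂ) := by
    rw [hrdef]
    push_cast
    linear_combination ((a:ℂ)+(t:ℂ)*I)*hq + hbC + (t:ℂ)^2*Complex.I_sq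
  have ht2 : c^2 ≤ t^2 := by
    nlinarith [him, hc, _root_.sq_abs t, abs_nonneg t]
  have h1 : r.re^2 - r.im^2 = c^2 - t^2 := by
    have := congrArg Complex.re hr2
    simp [pow_two, Complex.mul_re] at this
    nlinarith [this]
  have h2 : r.re * r.im = 0 := by
    have := congrArg Complex.im hr2
    simp [pow_two, Complex.mul_im] at this
    nlinarith [this]
  have hre0 : r.re = 0 := by
    rcases mul_eq_zero.1 h2 with h | h
    · exact h
    · have h0 : r.re^2 ≤ 0 := by nlinarith
      nlinarith [sq_nonneg r.re, h0]
  have hzz : ((a:ℂ)+(t:ℂ)*I)*z = r - b := by rw [hrdef]; ring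
  have hN := congrArg Complex.normSq hzz
  rw [map_mul] at hN
  have hNr : Complex.normSq (r - ((b:ℝ):ℂ)) = a^2 + t^2 := by
    simp [Complex.normSq_apply, Complex.sub_re, Complex.sub_im, hre0]
    nlinarith [h1, hb2]
  have hNd : Complex.normSq ((a:ℂ)+(t:ℂ)*I) = a^2 + t^2 := by
    simp [Complex.normSq_apply, Complex.add_re, Complex.add_im]
    ring
  rw [hNr, hNd] at hN
  have hNz := normSq_lt_one_of_abs hz
  have hat : 0 < a^2 + t^2 := by positivity
  nlinarith [hN, hNz, hat]

set_option maxHeartbeats 1000000 in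
lemma root_exists (a b c : ℝ) (ha : a ≠ 0) (hc : 0 < c) (hb2 : b^2 = c^2+a^2) (hb : 0 < b)
    (w : ℂ) (hw : ¬(w.re = 0 ∧ c ≤ |w.im|)) :
    ∃ z : ℂ, ‖z‖ < 1 ∧ ((a:ℂ)+w)*z^2 + 2*(b:ℂ)*z + ((a:ℂ)-w) = 0 := by
  have hbC : ((b:ℝ):ℂ)^2 = (c:ℂ)^2 + (a:ℂ)^2 := by exact_mod_cast hb2
  have ha2 : 0 < a^2 := by positivity
  have hab : |a| < b := by nlinarith [abs_nonneg a, _root_.sq_abs a]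
  have hc2 : b^2 - a^2 = c^2 := by linarith
  by_cases hu : w.re = 0
  · -- CASE 1 : w = v·I with |v| < c ; use a real square root of c² - v²
    have hv : |w.im| < c := by
      by_contra h
      exact hw ⟨hu, le_of_not_gt h⟩
    set v := w.im with hvdef
    have hwv : w = (v:ℂ) * I := by apply Complex.ext <;> simp [hu, hvdef]
    have hv2 : v^2 < c^2 := by nlinarith [_root_.sq_abs v, abs_nonneg v]
    set s := Real.sqrt (c^2 - v^2) with hsdef
    have hs2 : s^2 = c^2 - v^2 := Real.sq_sqrt (by nlinarith)
    have hs2C : ((s:ℝ):ℂ)^2 = (c:ℂ)^2 - (v:ℂ)^2 := by exact_mod_cast hs2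
    have hs_pos : 0 < s := Real.sqrt_pos.2 (by nlinarith)
    have hsb : s < b := by nlinarith
    have hd : ((a:ℂ) + w) ≠ 0 := by
      intro h
      have := congrArg Complex.re h
      simp [hu] at this
      exact ha this
    set z : ℂ := ((-b+s : ℝ):ℂ) / ((a:ℂ)+w) with hzdef
    have hdz : ((a:ℂ)+w) * z = ((-b+s : ℝ):ℂ) := by
      rw [hzdef]; field_simp
    clear_value z
    refine ⟨z, ?_, ?_⟩
    · rw [hzdef, norm_div, div_lt_one (norm_pos_iff.2 hd)]
      have h1 : ‖((-b+s : ℝ):ℂ)‖ = b - s := by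
        rw [Complex.norm_real, Real.norm_eq_abs, abs_of_neg (by linarith)]; ring
      have h2 : ‖(a:ℂ)+w‖^2 = a^2 + v^2 := by
        rw [Complex.sq_norm]
        simp [Complex.normSq_apply, hu, ← hvdef]
        ring
      rw [h1]
      nlinarith [norm_nonneg ((a:ℂ)+w), hv2, hs2, hsb, hs_pos]
    · have h1 : ((-b+s:ℝ):ℂ)^2 + 2*(b:ℂ)*((-b+s:ℝ):ℂ) + ((a:ℂ)+w)*((a:ℂ)-w) = 0 := by
        rw [hwv]
        push_cast
        linear_combination hs2C - hbC + (-(v:ℂ)^2) * Complex.I_sq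
      have h0 : ((a:ℂ)+w) * (((a:ℂ)+w)*z^2 + 2*(b:ℂ)*z + ((a:ℂ)-w)) = 0 := by
        calc ((a:ℂ)+w) * (((a:ℂ)+w)*z^2 + 2*(b:ℂ)*z + ((a:ℂ)-w))
            = (((a:ℂ)+w)*z)^2 + 2*(b:ℂ)*(((a:ℂ)+w)*z) + ((a:ℂ)+w)*((a:ℂ)-w) := by ring
          _ = 0 := by rw [hdz]; exact h1
      exact (mul_eq_zero.1 h0).resolve_left hd
  · -- CASE 2 : w.re ≠ 0
    by_cases hd : ((a:ℂ) + w) = 0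
    · refine ⟨((-(a/b) : ℝ):ℂ), ?_, ?_⟩
      · rw [Complex.norm_real, Real.norm_eq_abs, abs_neg, abs_div, abs_of_pos hb, div_lt_one hb]
        exact hab
      · have hbne : (b:ℂ) ≠ 0 := by exact_mod_cast hb.ne'
        have hwa : w = -(a:ℂ) := by linear_combination hd
        rw [hd, hwa]
        push_cast
        field_simp
        ring
    · obtain ⟨s, hs⟩ := sq_exists ((c:ℂ)^2 + w^2)
      set d : ℂ := (a:ℂ) + w with hddef
      set z₁ : ℂ := (-(b:ℂ) + s) / d with hz1def
      set z₂ : ℂ := (-(b:ℂ) - s) / d with hz2def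
      have hdz1 : d * z₁ = -(b:ℂ) + s := by rw [hz1def]; field_simp
      have hdz2 : d * z₂ = -(b:ℂ) - s := by rw [hz2def]; field_simp
      clear_value z₁ z₂
      have hroot : ∀ z : ℂ, d * z = -(b:ℂ) + s ∨ d * z = -(b:ℂ) - s →
          ((a:ℂ)+w)*z^2 + 2*(b:ℂ)*z + ((a:ℂ)-w) = 0 := by
        intro z hz
        have h0 : d * (((a:ℂ)+w)*z^2 + 2*(b:ℂ)*z + ((a:ℂ)-w)) =
            (d*z)^2 + 2*(b:ℂ)*(d*z) + ((a:ℂ)+w)*((a:ℂ)-w) := by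
          rw [hddef]; ring
        have h1 : (d*z)^2 + 2*(b:ℂ)*(d*z) + ((a:ℂ)+w)*((a:ℂ)-w) = 0 := by
          rcases hz with h | h <;> rw [h] <;> linear_combination hs - hbC
        have := h0.trans h1
        exact (mul_eq_zero.1 this).resolve_left hd
      have hVsum : d * (z₁ + z₂) = -2*(b:ℂ) := by
        linear_combination hdz1 + hdz2
      have hVprod : d * (z₁ * z₂) = (a:ℂ) - w := by
        have h2 : d * (d * (z₁*z₂)) = (b:ℂ)^2 - s^2 := by
          calc d * (d * (z₁*z₂)) = (d*z₁)*(d*z₂) := by ring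
            _ = (b:ℂ)^2 - s^2 := by rw [hdz1, hdz2]; ring
        have h3 : d * (d * (z₁*z₂)) = d * ((a:ℂ)-w) := by
          rw [h2, hs, hbC, hddef]; ring
        exact mul_left_cancel₀ hd h3
      have hR : ((a:ℂ) + (b:ℂ)*z₁) * z₂ = -((a:ℂ)*z₁ + (b:ℂ)) := by
        have h4 : d * (((a:ℂ) + (b:ℂ)*z₁) * z₂ + ((a:ℂ)*z₁ + (b:ℂ))) = 0 := by
          calc d * (((a:ℂ) + (b:ℂ)*z₁) * z₂ + ((a:ℂ)*z₁ + (b:ℂ)))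
              = (a:ℂ) * (d*(z₁+z₂)) + (b:ℂ) * (d*(z₁*z₂)) + (b:ℂ)*d := by ring
            _ = 0 := by rw [hVsum, hVprod, hddef]; ring
        have := (mul_eq_zero.1 h4).resolve_left hd
        linear_combination this
      have hR' : ((a:ℂ) + (b:ℂ)*z₂) * z₁ = -((a:ℂ)*z₂ + (b:ℂ)) := by
        have h4 : d * (((a:ℂ) + (b:ℂ)*z₂) * z₁ + ((a:ℂ)*z₂ + (b:ℂ))) = 0 := by
          calc d * (((a:ℂ) + (b:ℂ)*z₂) * z₁ + ((a:ℂ)*z₂ + (b:ℂ)))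
              = (a:ℂ) * (d*(z₁+z₂)) + (b:ℂ) * (d*(z₁*z₂)) + (b:ℂ)*d := by ring
            _ = 0 := by rw [hVsum, hVprod, hddef]; ring
        have := (mul_eq_zero.1 h4).resolve_left hd
        linear_combination this
      set n₁ := Complex.normSq z₁ with hn1
      set n₂ := Complex.normSq z₂ with hn2
      set P₁ := Complex.normSq ((a:ℂ) + (b:ℂ)*z₁) with hP1
      set P₂ := Complex.normSq ((a:ℂ) + (b:ℂ)*z₂) with hP2
      have hPn1 : P₁ * n₂ = P₁ + c^2 * (1 - n₁) := by
        have hthis := congrArg Complex.normSq hR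
        rw [map_mul, Complex.normSq_neg] at hthis
        have hid := normSq_id a b z₁
        rw [← hP1, ← hn2] at hthis
        rw [← hP1, ← hn1] at hid
        linear_combination hthis + hid + (1-n₁) * hc2
      have hPn2 : P₂ * n₁ = P₂ + c^2 * (1 - n₂) := by
        have hthis := congrArg Complex.normSq hR'
        rw [map_mul, Complex.normSq_neg] at hthis
        have hid := normSq_id a b z₂
        rw [← hP2, ← hn1] at hthis
        rw [← hP2, ← hn2] at hid
        linear_combination hthis + hid + (1-n₂) * hc2
      have hP1pos : 0 < P₁ := by
        rcases lt_or_eq_of_le (Complex.normSq_nonneg ((a:ℂ) + (b:ℂ)*z₁)) with h | h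
        · exact h
        · exfalso
          have h0 : (a:ℂ) + (b:ℂ)*z₁ = 0 := Complex.normSq_eq_zero.1 h.symm
          have h1 : (a:ℂ)*z₁ + (b:ℂ) = 0 := by
            have h5 := hR
            rw [h0, zero_mul] at h5
            linear_combination h5
          have h4 : (a:ℝ)^2 = b^2 := by
            have hcc : ((a^2 : ℝ) : ℂ) = ((b^2 : ℝ) : ℂ) := by
              push_cast
              linear_combination (a:ℂ) * h0 - (b:ℂ) * h1
            exact_mod_cast hcc
          nlinarith
      have hP2pos : 0 < P₂ := by
        rcases lt_or_eq_of_le (Complex.normSq_nonneg ((a:ℂ) + (b:ℂ)*z₂)) with h | h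
        · exact h
        · exfalso
          have h0 : (a:ℂ) + (b:ℂ)*z₂ = 0 := Complex.normSq_eq_zero.1 h.symm
          have h1 : (a:ℂ)*z₂ + (b:ℂ) = 0 := by
            have h5 := hR'
            rw [h0, zero_mul] at h5
            linear_combination h5
          have h4 : (a:ℝ)^2 = b^2 := by
            have hcc : ((a^2 : ℝ) : ℂ) = ((b^2 : ℝ) : ℂ) := by
              push_cast
              linear_combination (a:ℂ) * h0 - (b:ℂ) * h1
            exact_mod_cast hcc
          nlinarith
      have hprod : n₁ * n₂ * Complex.normSq d = Complex.normSq ((a:ℂ) - w) := by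
        have hzz : z₁ * z₂ * d = (a:ℂ) - w := by linear_combination hVprod
        have hN := congrArg Complex.normSq hzz
        rw [map_mul, map_mul] at hN
        rw [← hn1, ← hn2] at hN
        linarith [hN]
      have hNd : Complex.normSq d = (a + w.re)^2 + w.im^2 := by
        rw [hddef]
        simp [Complex.normSq_apply, Complex.add_re, Complex.add_im]
        ring
      have hNaw : Complex.normSq ((a:ℂ) - w) = (a - w.re)^2 + w.im^2 := by
        simp [Complex.normSq_apply, Complex.sub_re, Complex.sub_im]
        ring
      have hdpos : 0 < Complex.normSq d := Complex.normSq_pos.2 hd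
      have hprod' : n₁ * n₂ * ((a + w.re)^2 + w.im^2) = (a - w.re)^2 + w.im^2 := by
        rw [← hNd, ← hNaw]; exact hprod
      have hdpos' : (0:ℝ) < (a + w.re)^2 + w.im^2 := by rw [← hNd]; exact hdpos
      have hn1nn : 0 ≤ n₁ := Complex.normSq_nonneg z₁
      have hn2nn : 0 ≤ n₂ := Complex.normSq_nonneg z₂
      have habs1 : n₁ < 1 → ‖z₁‖ < 1 := by
        intro h; exact abs_lt_one_of_normSq (by rw [← hn1]; exact h)
      have habs2 : n₂ < 1 → ‖z₂‖ < 1 := by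
        intro h; exact abs_lt_one_of_normSq (by rw [← hn2]; exact h)
      clear_value n₁ n₂ P₁ P₂
      have hkey : n₁ < 1 ∨ n₂ < 1 := by
        rcases lt_trichotomy (a * w.re) 0 with h | h | h
        · have hgt : 1 < n₁ * n₂ := by nlinarith [hprod', hdpos', h]
          have hone : 1 < n₁ ∨ 1 < n₂ := by
            by_contra hcon
            push_neg at hcon
            nlinarith [mul_le_mul hcon.1 hcon.2 hn2nn zero_le_one]
          rcases hone with h1 | h1
          · right; nlinarith [hPn1, hP1pos, hc]
          · left; nlinarith [hPn2, hP2pos, hc]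
        · exfalso
          rcases mul_eq_zero.1 h with h' | h'
          · exact ha h'
          · exact hu h'
        · have hlt : n₁ * n₂ < 1 := by nlinarith [hprod', hdpos', h]
          by_contra hcon
          push_neg at hcon
          nlinarith [mul_le_mul hcon.1 hcon.2 zero_le_one hn1nn]
      rcases hkey with h | h
      · exact ⟨z₁, habs1 h, hroot z₁ (Or.inl hdz1)⟩
      · exact ⟨z₂, habs2 h, hroot z₂ (Or.inr hdz2)⟩



noncomputable section

/-- The open unit disk in the complex plane. -/
def unitDisk : Set ℂ := Metric.ball 0 1

lemma mem_unitDisk {z : ℂ} : z ∈ unitDisk ↔ ‖z‖ < 1 := by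
  simp [unitDisk, Metric.mem_ball, Complex.dist_eq]

/-- `h` is subordinate to `φ` on the unit disk: `h = φ ∘ ω` for some analytic
self-map `ω` of the unit disk fixing the origin. -/
def Subordinate (h φ : ℂ → ℂ) : Prop :=
  ∃ ω : ℂ → ℂ, AnalyticOnNhd ℂ ω unitDisk ∧ ω 0 = 0 ∧
    Set.MapsTo ω unitDisk unitDisk ∧ ∀ z ∈ unitDisk, h z = φ (ω z)

set_option maxHeartbeats 1000000 in
/-- **Example (c).** For `a ∈ ℝ \ {0}` and `c > 0`, the map
`φ(z) = a(1+z)/(1-z) + 2(√(c²+a²) - a)z/(1-z²)` is univalent on the unit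
disk, its image is the complement of the two vertical half-lines
`{w : Re w = 0, |Im w| ≥ c}`, `φ(0) = a`, and
`dist(φ(0), ∂φ(𝔻)) = √(c²+a²)`. -/
theorem example_c_univalent_image_dist
    (a c : ℝ) (ha : a ≠ 0) (hc : 0 < c)
    (φ : ℂ → ℂ)
    (hφ : ∀ z : ℂ, φ z = (a : ℂ) * (1 + z) / (1 - z) +
      2 * ((Real.sqrt (c ^ 2 + a ^ 2) : ℂ) - (a : ℂ)) * z / (1 - z ^ 2)) :
    Set.InjOn φ unitDisk ∧
    φ '' unitDisk = {w : ℂ | w.re = 0 ∧ c ≤ |w.im|}ᶜ ∧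
    φ 0 = (a : ℂ) ∧
    Metric.infDist (φ 0) (frontier (φ '' unitDisk)) = Real.sqrt (c ^ 2 + a ^ 2) := by
  have hcc : (0:ℝ) ≤ c^2+a^2 := by positivity
  set b : ℝ := Real.sqrt (c ^ 2 + a ^ 2) with hbdef
  have hb2 : b^2 = c^2+a^2 := Real.sq_sqrt hcc
  have ha2 : 0 < a^2 := by positivity
  have hcsq : 0 < c^2 := by positivity
  have hb : 0 < b := Real.sqrt_pos.2 (by positivity)
  -- the key algebraic identity
  have hkey : ∀ z : ℂ, ‖z‖ < 1 →
      (1 - z^2) * φ z = (a:ℂ)*(1+z^2) + 2*(b:ℂ)*z := by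
    intro z hz
    have h1 : (1:ℂ) - z ≠ 0 := by
      intro h
      have hz1 : z = 1 := by linear_combination -h
      rw [hz1] at hz; simp at hz
    have h2 : (1:ℂ) + z ≠ 0 := by
      intro h
      have hz1 : z = -1 := by linear_combination h
      rw [hz1] at hz; simp at hz
    have h3 : (1:ℂ) - z^2 ≠ 0 := one_sub_sq_ne hz
    rw [hφ z]
    field_simp
    ring
  -- injectivity
  have hinj : Set.InjOn φ unitDisk := by
    intro z₁ hz₁ z₂ hz₂ heq
    by_contra hne
    have h1 := hkey z₁ (mem_unitDisk.1 hz₁)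
    have h2 := hkey z₂ (mem_unitDisk.1 hz₂)
    have hfac : (z₁ - z₂) * ((a:ℂ)*z₁ + (a:ℂ)*z₂ + (b:ℂ) + (b:ℂ)*z₁*z₂) = 0 := by
      linear_combination (-(1:ℂ)/2) * ((1-z₂^2) * h1 - (1-z₁^2) * h2 - (1-z₁^2)*(1-z₂^2) * heq)
    have hF := (mul_eq_zero.1 hfac).resolve_left (sub_ne_zero.2 hne)
    have hrel : ((a:ℂ) + (b:ℂ)*z₁) * z₂ = -((a:ℂ)*z₁ + (b:ℂ)) := by
      linear_combination hF
    have hN := congrArg Complex.normSq hrel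
    rw [map_mul, Complex.normSq_neg] at hN
    have hid := normSq_id a b z₁
    have hn1 : Complex.normSq z₁ < 1 := normSq_lt_one_of_abs (mem_unitDisk.1 hz₁)
    have hn2 : Complex.normSq z₂ < 1 := normSq_lt_one_of_abs (mem_unitDisk.1 hz₂)
    nlinarith [hN, hid, hb2, Complex.normSq_nonneg ((a:ℂ)+(b:ℂ)*z₁), ha2, hcsq]
  -- the image
  have himage : φ '' unitDisk = {w : ℂ | w.re = 0 ∧ c ≤ |w.im|}ᶜ := by
    ext w
    simp only [Set.mem_image, Set.mem_compl_iff, Set.mem_setOf_eq]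
    constructor
    · rintro ⟨z, hzD, rfl⟩
      have hz := mem_unitDisk.1 hzD
      have hq : ((a:ℂ)+φ z)*z^2 + 2*(b:ℂ)*z + ((a:ℂ)-φ z) = 0 := by
        linear_combination (-1:ℂ) * hkey z hz
      exact root_not_slit a b c ha hc hb2 z (φ z) hz hq
    · intro hw
      obtain ⟨z, hz, hq⟩ := root_exists a b c ha hc hb2 hb w hw
      refine ⟨z, mem_unitDisk.2 hz, ?_⟩
      have hk := hkey z hz
      have h0 : (1 - z^2) * (φ z - w) = 0 := by linear_combination hk + hq
      rcases mul_eq_zero.1 h0 with h | h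
      · exact absurd h (one_sub_sq_ne hz)
      · linear_combination h
  -- φ 0 = a
  have hφ0 : φ 0 = (a:ℂ) := by
    rw [hφ 0]
    norm_num
  -- the slit set
  set K : Set ℂ := {w : ℂ | w.re = 0 ∧ c ≤ |w.im|} with hKdef
  have hKclosed : IsClosed K := by
    have hKeq : K = {w : ℂ | w.re = 0} ∩ {w : ℂ | c ≤ |w.im|} := rfl
    rw [hKeq]
    exact (isClosed_eq Complex.continuous_re continuous_const).inter
      (isClosed_le continuous_const (continuous_abs.comp Complex.continuous_im))
  have hKint : interior K = ∅ := by
    rw [Set.eq_empty_iff_forall_notMem]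
    intro w hwint
    obtain ⟨ε, hε, hball⟩ := Metric.isOpen_iff.1 isOpen_interior w hwint
    have hd : dist (w + ((ε/2 : ℝ):ℂ)) w < ε := by
      rw [Complex.dist_eq]
      have : w + ((ε/2 : ℝ):ℂ) - w = ((ε/2 : ℝ):ℂ) := by ring
      rw [this, Complex.norm_real, Real.norm_eq_abs, abs_of_pos (by linarith)]
      linarith
    have hmem : w + ((ε/2 : ℝ):ℂ) ∈ K := interior_subset (hball hd)
    have hre0 : w.re = 0 := (interior_subset hwint).1
    have hre1 : (w + ((ε/2 : ℝ):ℂ)).re = 0 := hmem.1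
    simp [Complex.add_re, hre0] at hre1
    linarith
  have hfront : frontier (φ '' unitDisk) = K := by
    rw [himage, frontier_compl, hKclosed.frontier_eq, hKint, Set.diff_empty]
  have hcIK : (c:ℂ)*I ∈ K := by
    constructor
    · simp
    · simp [abs_of_pos hc]
  have hdist : Metric.infDist ((a:ℝ):ℂ) K = b := by
    apply le_antisymm
    · have hle := Metric.infDist_le_dist_of_mem (x := ((a:ℝ):ℂ)) hcIK
      have hdval : dist ((a:ℝ):ℂ) ((c:ℂ)*I) = b := by
        rw [Complex.dist_eq, Complex.norm_def]
        have hns : Complex.normSq ((a:ℂ) - (c:ℂ)*I) = c^2 + a^2 := by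
          simp [Complex.normSq_apply, Complex.sub_re, Complex.sub_im]
          ring
        rw [hns, hbdef]
      rw [hdval] at hle
      exact hle
    · by_contra hlt
      push_neg at hlt
      obtain ⟨y, hy, hdy⟩ := (Metric.infDist_lt_iff ⟨(c:ℂ)*I, hcIK⟩).1 hlt
      obtain ⟨hyre, hyim⟩ := hy
      rw [← not_le] at hdy
      apply hdy
      rw [Complex.dist_eq, Complex.norm_def]
      have hns : Complex.normSq ((a:ℂ) - y) = a^2 + y.im^2 := by
        simp [Complex.normSq_apply, Complex.sub_re, Complex.sub_im, hyre]
        ring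
      rw [hns, hbdef]
      apply Real.sqrt_le_sqrt
      nlinarith [_root_.sq_abs y.im, abs_nonneg y.im]
  refine ⟨hinj, himage, hφ0, ?_⟩
  rw [hfront, hφ0, hdist]
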